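/- If ν₁, ν₂, ν₃ are independent Discrete Laplace random variables with parameter ε, then their sum ν₁+ν₂+ν₃ has the same distribution as the sum of n independent differences Polya(3/n, e^{−ε}) − Polya(3/n, e^{−ε}). -/

import Mathlib

open MeasureTheory ProbabilityTheory
open Polynomial Finset

lemma negOnePow_smul_real (k : ℕ) (x : ℝ) : (k : ℤ).negOnePow • x = (-1) ^ k * x := by
  rw [Units.smul_def, Int.negOnePow_def]
  simp

lemma desc_neg_eq (r : ℝ) (i : ℕ) :
    (descPochhammer ℤ i).smeval (-r) = (-1)^i * (ascPochhammer ℕ i).smeval r := by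
  have h := Polynomial.ascPochhammer_smeval_neg_eq_descPochhammer (R := ℝ) (-r) i
  rw [neg_neg] at h
  rw [h, negOnePow_smul_real, ← mul_assoc, ← pow_add, ← two_mul, pow_mul]
  simp

lemma asc_vandermonde (r s : ℝ) (k : ℕ) :
    (ascPochhammer ℕ k).smeval (r + s) =
      ∑ ij ∈ antidiagonal k, (k.choose ij.1 : ℝ) *
        ((ascPochhammer ℕ ij.1).smeval r * (ascPochhammer ℕ ij.2).smeval s) := by
  have h0 := Polynomial.ascPochhammer_smeval_neg_eq_descPochhammer (R := ℝ) (-(r+s)) k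
  rw [neg_neg] at h0
  have h1 := Ring.descPochhammer_smeval_add (R := ℝ) (r := -r) (s := -s) k (Commute.all _ _)
  rw [show (-r) + (-s) = -(r+s) by ring] at h1
  rw [h0, h1, negOnePow_smul_real, mul_sum]
  refine sum_congr rfl fun ij hij => ?_
  rw [desc_neg_eq, desc_neg_eq]
  have hk : ij.1 + ij.2 = k := (Finset.HasAntidiagonal.mem_antidiagonal).mp hij
  rw [← hk]
  push_cast
  ring_nf
  rw [mul_comm ij.1 2, mul_comm ij.2 2, pow_mul, pow_mul, neg_one_sq, one_pow, one_pow,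
    mul_one, mul_one]

lemma Gamma_asc (r : ℝ) (hr : 0 < r) (j : ℕ) :
    Real.Gamma (j + r) = (ascPochhammer ℕ j).smeval r * Real.Gamma r := by
  induction j with
  | zero => simp [Polynomial.smeval_one]
  | succ j ih =>
    rw [ascPochhammer_succ_right, Polynomial.smeval_mul]
    have : ((j:ℝ) + 1) + r = (j + r) + 1 := by ring
    push_cast
    rw [this, Real.Gamma_add_one (by positivity), ih]
    simp [Polynomial.smeval_add, Polynomial.smeval_X, Polynomial.smeval_natCast]
    ring

noncomputable def pol (p r : ℝ) (j : ℕ) : ℝ :=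
  Real.Gamma (j + r) / (Real.Gamma (j + 1) * Real.Gamma r) * p ^ j * (1 - p) ^ (r : ℝ)

lemma pol_eq_asc (p r : ℝ) (hr : 0 < r) (j : ℕ) :
    pol p r j = (ascPochhammer ℕ j).smeval r / (j.factorial : ℝ) * p ^ j * (1 - p) ^ (r : ℝ) := by
  have h1 : Real.Gamma ((j:ℝ) + 1) = j.factorial := Real.Gamma_nat_eq_factorial j
  rw [pol, Gamma_asc r hr j, h1]
  have h2 : Real.Gamma r ≠ 0 := ne_of_gt (Real.Gamma_pos_of_pos hr)
  have h3 : (j.factorial : ℝ) ≠ 0 := Nat.cast_ne_zero.mpr j.factorial_ne_zero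
  field_simp

lemma pol_nonneg (p r : ℝ) (hp : 0 ≤ p) (hp1 : p ≤ 1) (hr : 0 < r) (j : ℕ) : 0 ≤ pol p r j := by
  have h1 : 0 < Real.Gamma ((j:ℝ) + r) := Real.Gamma_pos_of_pos (by positivity)
  have h2 : 0 < Real.Gamma ((j:ℝ) + 1) := Real.Gamma_pos_of_pos (by positivity)
  have h3 : 0 < Real.Gamma r := Real.Gamma_pos_of_pos hr
  have h4 : (0:ℝ) ≤ (1 - p) ^ (r : ℝ) := Real.rpow_nonneg (by linarith) _
  have h5 : (0:ℝ) ≤ p ^ j := pow_nonneg hp j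
  exact mul_nonneg (mul_nonneg (le_of_lt (div_pos h1 (mul_pos h2 h3))) h5) h4

lemma pol_one (p : ℝ) (j : ℕ) : pol p 1 j = (1 - p) * p ^ j := by
  rw [pol, Real.Gamma_one, Real.rpow_one]
  have h2 : 0 < Real.Gamma (j + 1) := Real.Gamma_pos_of_pos (by positivity)
  field_simp

lemma pol_conv (p r s : ℝ) (hp : 0 ≤ p) (hp1 : p < 1) (hr : 0 < r) (hs : 0 < s) (k : ℕ) :
    ∑ ij ∈ antidiagonal k, pol p r ij.1 * pol p s ij.2 = pol p (r + s) k := by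
  have key : ∀ ij ∈ antidiagonal k, pol p r ij.1 * pol p s ij.2 =
      (k.choose ij.1 : ℝ) * ((ascPochhammer ℕ ij.1).smeval r * (ascPochhammer ℕ ij.2).smeval s)
        * (p ^ k * (1 - p) ^ ((r:ℝ) + s) / (k.factorial : ℝ)) := by
    intro ij hij
    have hk : ij.1 + ij.2 = k := mem_antidiagonal.mp hij
    have hle : ij.1 ≤ k := by omega
    have hcf : (k.choose ij.1 : ℝ) * (ij.1.factorial : ℝ) * (ij.2.factorial : ℝ)
        = (k.factorial : ℝ) := by
      rw_mod_cast [show ij.2 = k - ij.1 by omega, Nat.choose_mul_factorial_mul_factorial hle]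
    rw [pol_eq_asc p r hr, pol_eq_asc p s hs]
    have hpow : p ^ ij.1 * p ^ ij.2 = p ^ k := by rw [← pow_add, hk]
    have hrpow : (1 - p) ^ (r:ℝ) * (1 - p) ^ (s:ℝ) = (1 - p) ^ ((r:ℝ) + s) :=
      (Real.rpow_add (by linarith) r s).symm
    have h1 : (ij.1.factorial : ℝ) ≠ 0 := Nat.cast_ne_zero.mpr ij.1.factorial_ne_zero
    have h2 : (ij.2.factorial : ℝ) ≠ 0 := Nat.cast_ne_zero.mpr ij.2.factorial_ne_zero
    have h3 : (k.factorial : ℝ) ≠ 0 := Nat.cast_ne_zero.mpr k.factorial_ne_zero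
    rw [← hpow, ← hrpow]
    field_simp
    linear_combination (-((ascPochhammer ℕ ij.1).smeval r * p ^ ij.1 * (1 - p) ^ (r:ℝ) *
      ((ascPochhammer ℕ ij.2).smeval s * p ^ ij.2 * (1 - p) ^ (s:ℝ)))) * hcf
  rw [sum_congr rfl key, ← sum_mul, ← asc_vandermonde, pol_eq_asc p (r+s) (by linarith)]
  ring
open Finset ENNReal
noncomputable section

def ncV (f g : ℕ → ℝ≥0∞) (a : ℕ) : ℝ≥0∞ :=
  ∑' q : ℕ × ℕ, if q.1 + q.2 = a then f q.1 * g q.2 else 0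

def dV (f g : ℕ → ℝ≥0∞) (z : ℤ) : ℝ≥0∞ :=
  ∑' q : ℕ × ℕ, if (q.1 : ℤ) - q.2 = z then f q.1 * g q.2 else 0

lemma mul_ite_zero' (P Q : Prop) [Decidable P] [Decidable Q] (a b : ℝ≥0∞) :
    (if P then a else 0) * (if Q then b else 0) = if P ∧ Q then a * b else 0 := by
  by_cases hP : P <;> by_cases hQ : Q <;> simp [hP, hQ]

lemma ite_tsum_zero {ι : Type*} (P : Prop) [Decidable P] (F : ι → ℝ≥0∞) :
    (if P then (∑' t, F t) else 0) = ∑' t, if P then F t else 0 := by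
  by_cases hP : P <;> simp [hP]

lemma tsum_collapse {β : Type*} [DecidableEq β] (c : β) (h : β → ℝ≥0∞) :
    ∑' x : β, (if x = c then h x else 0) = h c := by
  rw [tsum_eq_single c (fun b hb => by simp [hb])]; simp

lemma ncV_eq_sum (f g : ℕ → ℝ≥0∞) (a : ℕ) :
    ncV f g a = ∑ ij ∈ antidiagonal a, f ij.1 * g ij.2 := by
  rw [ncV, tsum_eq_sum (s := antidiagonal a) (fun q hq => by
    rw [if_neg]; rwa [Finset.HasAntidiagonal.mem_antidiagonal] at hq)]
  exact Finset.sum_congr rfl fun q hq => by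
    rw [if_pos]; rwa [Finset.HasAntidiagonal.mem_antidiagonal] at hq

lemma convD (f f' g g' : ℕ → ℝ≥0∞) (z : ℤ) :
    ∑' x : ℤ, dV f f' x * dV g g' (z - x) = dV (ncV f g) (ncV f' g') z := by
  classical
  have lhs_eq : ∑' x : ℤ, dV f f' x * dV g g' (z - x) =
      ∑' (q : ℕ × ℕ) (q' : ℕ × ℕ),
        if ((q.1 : ℤ) - q.2) + ((q'.1 : ℤ) - q'.2) = z
        then (f q.1 * f' q.2) * (g q'.1 * g' q'.2) else 0 := by
    have e1 : ∀ x : ℤ, dV f f' x * dV g g' (z - x) =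
        ∑' (q : ℕ × ℕ) (q' : ℕ × ℕ),
          if ((q.1 : ℤ) - q.2 = x) ∧ ((q'.1 : ℤ) - q'.2 = z - x)
          then (f q.1 * f' q.2) * (g q'.1 * g' q'.2) else 0 := by
      intro x
      rw [dV, dV, ← ENNReal.tsum_mul_right]
      refine tsum_congr fun q => ?_
      rw [← ENNReal.tsum_mul_left]
      exact tsum_congr fun q' => mul_ite_zero' _ _ _ _
    calc ∑' x : ℤ, dV f f' x * dV g g' (z - x)
        = ∑' (x : ℤ) (q : ℕ × ℕ) (q' : ℕ × ℕ),
            if ((q.1 : ℤ) - q.2 = x) ∧ ((q'.1 : ℤ) - q'.2 = z - x)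
            then (f q.1 * f' q.2) * (g q'.1 * g' q'.2) else 0 := tsum_congr e1
      _ = ∑' (q : ℕ × ℕ) (q' : ℕ × ℕ) (x : ℤ),
            if ((q.1 : ℤ) - q.2 = x) ∧ ((q'.1 : ℤ) - q'.2 = z - x)
            then (f q.1 * f' q.2) * (g q'.1 * g' q'.2) else 0 := by
          rw [ENNReal.tsum_comm]
          exact tsum_congr fun q => ENNReal.tsum_comm
      _ = ∑' (q : ℕ × ℕ) (q' : ℕ × ℕ),
            if ((q.1 : ℤ) - q.2) + ((q'.1 : ℤ) - q'.2) = z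
            then (f q.1 * f' q.2) * (g q'.1 * g' q'.2) else 0 := by
          refine tsum_congr fun q => tsum_congr fun q' => ?_
          have h : ∀ x : ℤ, (if ((q.1 : ℤ) - q.2 = x) ∧ ((q'.1 : ℤ) - q'.2 = z - x)
              then (f q.1 * f' q.2) * (g q'.1 * g' q'.2) else 0) =
              (if x = (q.1 : ℤ) - q.2 then
                (if ((q.1 : ℤ) - q.2) + ((q'.1 : ℤ) - q'.2) = z
                 then (f q.1 * f' q.2) * (g q'.1 * g' q'.2) else 0) else 0) := by
            intro x
            by_cases hx : x = (q.1 : ℤ) - q.2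
            · subst hx
              rw [if_pos rfl]
              refine if_congr ⟨fun hh => by omega, fun hh => ⟨rfl, by omega⟩⟩ rfl rfl
            · rw [if_neg (fun hh => hx hh.1.symm), if_neg hx]
          rw [tsum_congr h, tsum_collapse]
  rw [lhs_eq]
  have rhs_eq : dV (ncV f g) (ncV f' g') z =
      ∑' (u : ℕ × ℕ) (v : ℕ × ℕ),
        if ((u.1 : ℤ) + u.2) - ((v.1 : ℤ) + v.2) = z
        then (f u.1 * g u.2) * (f' v.1 * g' v.2) else 0 := by
    calc dV (ncV f g) (ncV f' g') z
        = ∑' (Q : ℕ × ℕ) (u : ℕ × ℕ) (v : ℕ × ℕ),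
            if (u.1 + u.2 = Q.1) ∧ (v.1 + v.2 = Q.2) ∧ ((Q.1 : ℤ) - Q.2 = z)
            then (f u.1 * g u.2) * (f' v.1 * g' v.2) else 0 := by
          rw [dV]
          refine tsum_congr fun Q => ?_
          rw [ncV, ncV, ← ENNReal.tsum_mul_right, ite_tsum_zero]
          refine tsum_congr fun u => ?_
          rw [← ENNReal.tsum_mul_left, ite_tsum_zero]
          refine tsum_congr fun v => ?_
          rw [mul_ite_zero']
          by_cases h1 : u.1 + u.2 = Q.1 <;> by_cases h2 : v.1 + v.2 = Q.2 <;>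
            by_cases h3 : (Q.1 : ℤ) - Q.2 = z <;> simp [h1, h2, h3]
      _ = ∑' (u : ℕ × ℕ) (v : ℕ × ℕ) (Q : ℕ × ℕ),
            if (u.1 + u.2 = Q.1) ∧ (v.1 + v.2 = Q.2) ∧ ((Q.1 : ℤ) - Q.2 = z)
            then (f u.1 * g u.2) * (f' v.1 * g' v.2) else 0 := by
          rw [ENNReal.tsum_comm]
          exact tsum_congr fun u => ENNReal.tsum_comm
      _ = ∑' (u : ℕ × ℕ) (v : ℕ × ℕ),
            if ((u.1 : ℤ) + u.2) - ((v.1 : ℤ) + v.2) = z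
            then (f u.1 * g u.2) * (f' v.1 * g' v.2) else 0 := by
          refine tsum_congr fun u => tsum_congr fun v => ?_
          have h : ∀ Q : ℕ × ℕ, (if (u.1 + u.2 = Q.1) ∧ (v.1 + v.2 = Q.2) ∧ ((Q.1 : ℤ) - Q.2 = z)
              then (f u.1 * g u.2) * (f' v.1 * g' v.2) else 0) =
              (if Q = (u.1 + u.2, v.1 + v.2) then
                (if ((u.1 : ℤ) + u.2) - ((v.1 : ℤ) + v.2) = z
                 then (f u.1 * g u.2) * (f' v.1 * g' v.2) else 0) else 0) := by
            intro Q
            by_cases hQ : Q = (u.1 + u.2, v.1 + v.2)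
            · subst hQ
              rw [if_pos rfl]
              refine if_congr ⟨fun hh => ?_, fun hh => ⟨rfl, rfl, ?_⟩⟩ rfl rfl
              · have := hh.2.2; push_cast at this ⊢; omega
              · push_cast at hh ⊢; omega
            · rw [if_neg, if_neg hQ]
              rintro ⟨h1, h2, -⟩
              exact hQ (Prod.ext h1.symm h2.symm)
          rw [tsum_congr h, tsum_collapse]
  rw [rhs_eq, ← ENNReal.tsum_prod, ← ENNReal.tsum_prod]
  calc ∑' (w : (ℕ × ℕ) × ℕ × ℕ),
        (if ((w.1.1 : ℤ) - w.1.2) + ((w.2.1 : ℤ) - w.2.2) = z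
         then (f w.1.1 * f' w.1.2) * (g w.2.1 * g' w.2.2) else 0)
      = ∑' (w : (ℕ × ℕ) × ℕ × ℕ),
        (fun w' : (ℕ × ℕ) × ℕ × ℕ =>
          if ((w'.1.1 : ℤ) + w'.1.2) - ((w'.2.1 : ℤ) + w'.2.2) = z
          then (f w'.1.1 * g w'.1.2) * (f' w'.2.1 * g' w'.2.2) else 0)
        (Equiv.prodProdProdComm ℕ ℕ ℕ ℕ w) := by
        refine tsum_congr fun w => ?_
        obtain ⟨⟨a, b⟩, ⟨c, d⟩⟩ := w
        simp only [Equiv.prodProdProdComm_apply]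
        exact if_congr ⟨fun hh => by omega, fun hh => by omega⟩ (by ring) rfl
    _ = _ := Equiv.tsum_eq (Equiv.prodProdProdComm ℕ ℕ ℕ ℕ)
      (fun w' : (ℕ × ℕ) × ℕ × ℕ =>
          if ((w'.1.1 : ℤ) + w'.1.2) - ((w'.2.1 : ℤ) + w'.2.2) = z
          then (f w'.1.1 * g w'.1.2) * (f' w'.2.1 * g' w'.2.2) else 0)
open MeasureTheory ProbabilityTheory ENNReal Finset

lemma indep_prob {Ω α β γ : Type*} [MeasureSpace Ω]
    [MeasurableSpace α] [MeasurableSingletonClass α] [Countable α]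
    [MeasurableSpace β] [MeasurableSingletonClass β] [Countable β]
    (A : Ω → α) (B : Ω → β) (hA : Measurable A) (hB : Measurable B)
    (h : IndepFun A B ℙ) [DecidableEq γ] (φ : α → β → γ) (c : γ) :
    ℙ {ω | φ (A ω) (B ω) = c} =
      ∑' q : α × β, if φ q.1 q.2 = c then ℙ {ω | A ω = q.1} * ℙ {ω | B ω = q.2} else 0 := by
  classical
  have hset : {ω | φ (A ω) (B ω) = c} =
      ⋃ q : α × β, if φ q.1 q.2 = c then ({ω | A ω = q.1} ∩ {ω | B ω = q.2}) else ∅ := by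
    ext ω
    simp only [Set.mem_setOf_eq, Set.mem_iUnion]
    constructor
    · intro hω
      exact ⟨(A ω, B ω), by simp [hω]⟩
    · rintro ⟨q, hq⟩
      by_cases hc : φ q.1 q.2 = c
      · rw [if_pos hc] at hq
        obtain ⟨h1, h2⟩ := hq
        simp only [Set.mem_setOf_eq] at h1 h2
        rw [← h1, ← h2] at hc; exact hc
      · rw [if_neg hc] at hq; exact absurd hq (Set.notMem_empty ω)
  have hmeas : ∀ q : α × β, MeasurableSet
      (if φ q.1 q.2 = c then ({ω | A ω = q.1} ∩ {ω | B ω = q.2}) else ∅) := by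
    intro q
    split_ifs
    · exact (hA (measurableSet_singleton q.1)).inter (hB (measurableSet_singleton q.2))
    · exact MeasurableSet.empty
  have hdisj : Pairwise (Function.onFun Disjoint
      (fun q : α × β => if φ q.1 q.2 = c then ({ω | A ω = q.1} ∩ {ω | B ω = q.2}) else ∅)) := by
    intro q q' hqq'
    dsimp [Function.onFun]
    split_ifs <;> try simp
    rw [Set.disjoint_left]
    rintro ω ⟨h1, h2⟩ ⟨h3, h4⟩
    simp only [Set.mem_setOf_eq] at h1 h2 h3 h4
    exact hqq' (Prod.ext (h1.symm.trans h3) (h2.symm.trans h4))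
  rw [hset, measure_iUnion hdisj hmeas]
  refine tsum_congr fun q => ?_
  split_ifs
  · exact h.measure_inter_preimage_eq_mul {q.1} {q.2}
      (measurableSet_singleton q.1) (measurableSet_singleton q.2)
  · exact measure_empty

lemma addZ {Ω : Type*} [MeasureSpace Ω]
    (A B : Ω → ℤ) (hA : Measurable A) (hB : Measurable B)
    (h : IndepFun A B ℙ) (z : ℤ) :
    ℙ {ω | A ω + B ω = z} = ∑' x : ℤ, ℙ {ω | A ω = x} * ℙ {ω | B ω = z - x} := by
  classical
  rw [indep_prob A B hA hB h (· + ·) z, ENNReal.tsum_prod']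
  refine tsum_congr fun x => ?_
  have h' : ∀ y : ℤ, (if x + y = z then ℙ {ω | A ω = x} * ℙ {ω | B ω = y} else 0) =
      (if y = z - x then ℙ {ω | A ω = x} * ℙ {ω | B ω = y} else 0) := by
    intro y; exact if_congr (by omega) rfl rfl
  rw [tsum_congr h', tsum_eq_single (z - x) (fun y hy => by rw [if_neg hy]), if_pos rfl]

lemma ncV_pol (p r s : ℝ) (hp : 0 ≤ p) (hp1 : p < 1) (hr : 0 < r) (hs : 0 < s) (a : ℕ) :
    ncV (fun j => ENNReal.ofReal (pol p r j)) (fun j => ENNReal.ofReal (pol p s j)) a =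
      ENNReal.ofReal (pol p (r + s) a) := by
  calc ncV (fun j => ENNReal.ofReal (pol p r j)) (fun j => ENNReal.ofReal (pol p s j)) a
      = ∑ ij ∈ antidiagonal a, ENNReal.ofReal (pol p r ij.1 * pol p s ij.2) := by
        rw [ncV_eq_sum]
        exact Finset.sum_congr rfl fun ij _ =>
          (ENNReal.ofReal_mul (pol_nonneg p r hp hp1.le hr ij.1)).symm
    _ = ENNReal.ofReal (∑ ij ∈ antidiagonal a, pol p r ij.1 * pol p s ij.2) :=
        (ENNReal.ofReal_sum_of_nonneg (fun ij _ =>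
          mul_nonneg (pol_nonneg p r hp hp1.le hr ij.1)
            (pol_nonneg p s hp hp1.le hs ij.2))).symm
    _ = ENNReal.ofReal (pol p (r + s) a) := by rw [pol_conv p r s hp hp1 hr hs a]

lemma sum_pmf {Ω ι : Type*} [MeasureSpace Ω] [IsProbabilityMeasure (ℙ : Measure Ω)]
    [DecidableEq ι] (p r : ℝ) (hp : 0 ≤ p) (hp1 : p < 1) (hr : 0 < r)
    (Y : ι → Ω → ℕ) (hmeas : ∀ i, Measurable (Y i))
    (hindep : iIndepFun Y ℙ)
    (hlaw : ∀ i k, ℙ {ω | Y i ω = k} = ENNReal.ofReal (pol p r k)) :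
    ∀ s : Finset ι, s.Nonempty → ∀ k : ℕ,
      ℙ {ω | ∑ i ∈ s, Y i ω = k} = ENNReal.ofReal (pol p (s.card * r) k) := by
  intro s hs
  induction hs using Finset.Nonempty.cons_induction with
  | singleton a => intro k; simpa using hlaw a k
  | cons a s ha hs ih =>
    intro k
    have hB : Measurable (fun ω => ∑ i ∈ s, Y i ω) := by
      apply Finset.measurable_sum
      exact fun i _ => hmeas i
    have hindAB : IndepFun (Y a) (fun ω => ∑ i ∈ s, Y i ω) ℙ := by
      have h2 := (hindep.indepFun_finsetSum_of_notMem hmeas ha).symm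
      have heq : (∑ j ∈ s, Y j) = fun ω => ∑ i ∈ s, Y i ω := by
        funext ω; simp
      rwa [heq] at h2
    have step : ℙ {ω | ∑ i ∈ Finset.cons a s ha, Y i ω = k} =
        ncV (fun j => ENNReal.ofReal (pol p r j))
          (fun j => ENNReal.ofReal (pol p (s.card * r) j)) k := by
      have := indep_prob (Y a) (fun ω => ∑ i ∈ s, Y i ω) (hmeas a) hB hindAB (· + ·) k
      simp only [Finset.sum_cons]
      rw [show {ω | Y a ω + ∑ i ∈ s, Y i ω = k} = {ω | (fun ω => Y a ω) ω + (fun ω => ∑ i ∈ s, Y i ω) ω = k} from rfl]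
      rw [this, ncV]
      exact tsum_congr fun q => by rw [hlaw a q.1, ih q.2]
    rw [step, ncV_pol p r (s.card * r) hp hp1 hr (by positivity)]
    congr 1
    rw [Finset.card_cons]
    push_cast
    ring

lemma lap_decomp (p : ℝ) (hp : 0 < p) (hp1 : p < 1) (z : ℤ) :
    ENNReal.ofReal ((1 - p) / (1 + p) * p ^ z.natAbs) =
      dV (fun a => ENNReal.ofReal ((1 - p) * p ^ a))
         (fun a => ENNReal.ofReal ((1 - p) * p ^ a)) z := by
  classical
  have h1p : (0:ℝ) < 1 - p := by linarith
  have hgpos : ∀ a b : ℕ, 0 < (1 - p) * p ^ a * ((1 - p) * p ^ b) := by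
    intro a b; positivity
  rw [dV]
  have key : (∑' q : ℕ × ℕ, if (q.1 : ℤ) - q.2 = z
        then ENNReal.ofReal ((1 - p) * p ^ q.1) * ENNReal.ofReal ((1 - p) * p ^ q.2) else 0) =
      ∑' m : ℕ, ENNReal.ofReal ((1 - p) * p ^ (m + z.toNat)) *
        ENNReal.ofReal ((1 - p) * p ^ (m + (-z).toNat)) := by
    refine tsum_eq_tsum_of_ne_zero_bij
      (fun m => (m.1 + z.toNat, m.1 + (-z).toNat)) ?_ ?_ ?_
    · intro m1 m2 h
      simp only [Prod.mk.injEq, add_left_inj] at h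
      exact Subtype.ext (by omega : (m1:ℕ) = m2)
    · rintro q hq
      simp only [Function.mem_support, ne_eq, ite_eq_right_iff, not_forall] at hq
      obtain ⟨hcond, -⟩ := hq
      refine ⟨⟨min q.1 q.2, ?_⟩, ?_⟩
      · simp only [Function.mem_support, ne_eq]
        have := hgpos (min q.1 q.2 + z.toNat) (min q.1 q.2 + (-z).toNat)
        intro hco
        rcases mul_eq_zero.mp hco with hc | hc <;>
          rw [ENNReal.ofReal_eq_zero] at hc <;> nlinarith [pow_pos hp (min q.1 q.2 + z.toNat), pow_pos hp (min q.1 q.2 + (-z).toNat)]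
      · have h1 : q.1 = min q.1 q.2 + z.toNat := by omega
        have h2 : q.2 = min q.1 q.2 + (-z).toNat := by omega
        exact Prod.ext h1.symm h2.symm
    · intro m
      rw [if_pos (by push_cast; omega)]
  rw [key]
  have term : ∀ m : ℕ, ENNReal.ofReal ((1 - p) * p ^ (m + z.toNat)) *
      ENNReal.ofReal ((1 - p) * p ^ (m + (-z).toNat)) =
      ENNReal.ofReal ((1 - p) ^ 2 * p ^ z.natAbs * (p ^ 2) ^ m) := by
    intro m
    have h1p : (0:ℝ) < 1 - p := by linarith
    rw [← ENNReal.ofReal_mul (by positivity)]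
    congr 1
    have hN : z.toNat + (-z).toNat = z.natAbs := by omega
    have hsplit : (1 - p) * p ^ (m + z.toNat) * ((1 - p) * p ^ (m + (-z).toNat)) =
        (1 - p) ^ 2 * (p ^ (m + z.toNat) * p ^ (m + (-z).toNat)) := by ring
    rw [hsplit, ← pow_add,
      show m + z.toNat + (m + (-z).toNat) = (z.toNat + (-z).toNat) + 2 * m by ring,
      hN, pow_add, pow_mul]
    ring
  have h1p : (0:ℝ) < 1 - p := by linarith
  rw [tsum_congr term, ← ENNReal.ofReal_tsum_of_nonneg
    (fun m => by positivity)
    (((summable_geometric_of_lt_one (by positivity) (by nlinarith)).mul_left _))]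
  congr 1
  rw [tsum_mul_left, tsum_geometric_of_lt_one (by positivity) (by nlinarith)]
  have h1 : 1 - p ^ 2 = (1 - p) * (1 + p) := by ring
  have h2 : (1:ℝ) - p ^ 2 > 0 := by nlinarith
  field_simp
  ring


/-- If `ν₁, ν₂, ν₃` are independent Discrete Laplace random variables with parameter `ε`
(mass at `z ∈ ℤ` equal to `((1−e^{−ε})/(1+e^{−ε}))·e^{−ε|z|}`), then `ν₁+ν₂+ν₃` has the
same distribution as the sum of `n` independent differences
`Polya(3/n, e^{−ε}) − Polya(3/n, e^{−ε})`, where `Polya(r,p)` has mass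
`Pr[X=j] = (Γ(j+r)/(Γ(j+1)Γ(r)))·p^j·(1−p)^r`. -/
theorem three_discrete_laplace_eq_sum_polya_differences
    {Ω₁ Ω₂ : Type*} [MeasureSpace Ω₁] [MeasureSpace Ω₂]
    [IsProbabilityMeasure (ℙ : Measure Ω₁)] [IsProbabilityMeasure (ℙ : Measure Ω₂)]
    (ε : ℝ) (hε : 0 < ε) (n : ℕ) (hn : 0 < n)
    (ν : Fin 3 → Ω₁ → ℤ) (hνmeas : ∀ i, Measurable (ν i))
    (hνindep : iIndepFun ν ℙ)
    (hνlaw : ∀ i, ∀ z : ℤ,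
      ((ℙ : Measure Ω₁) {ω | ν i ω = z}).toReal =
        ((1 - Real.exp (-ε)) / (1 + Real.exp (-ε))) * Real.exp (-ε * |(z : ℝ)|))
    (X : Fin n ⊕ Fin n → Ω₂ → ℕ) (hXmeas : ∀ i, Measurable (X i))
    (hXindep : iIndepFun X ℙ)
    (hXlaw : ∀ i, ∀ j : ℕ,
      ((ℙ : Measure Ω₂) {ω | X i ω = j}).toReal =
        Real.Gamma (j + 3 / n) / (Real.Gamma (j + 1) * Real.Gamma (3 / n)) *
          Real.exp (-ε) ^ j * (1 - Real.exp (-ε)) ^ ((3 : ℝ) / n)) :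
    Measure.map (fun ω => ν 0 ω + ν 1 ω + ν 2 ω) ℙ =
      Measure.map (fun ω => ∑ i : Fin n, ((X (Sum.inl i) ω : ℤ) - (X (Sum.inr i) ω : ℤ))) ℙ := by
  classical
  set p : ℝ := Real.exp (-ε) with hpdef
  have hp : 0 < p := Real.exp_pos _
  have hp1 : p < 1 := Real.exp_lt_one_iff.mpr (by linarith)
  have hr : (0:ℝ) < 3 / n := by positivity
  set r : ℝ := 3 / (n:ℝ) with hrdef
  -- ENNReal-valued laws
  have hνlaw' : ∀ i, ∀ z : ℤ, (ℙ : Measure Ω₁) {ω | ν i ω = z} =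
      ENNReal.ofReal ((1 - p) / (1 + p) * p ^ z.natAbs) := by
    intro i z
    rw [← ENNReal.ofReal_toReal (measure_ne_top ℙ _), hνlaw i z]
    congr 1
    have habs : |(z:ℝ)| = (z.natAbs : ℝ) := by
      rw [← Int.cast_abs, Int.abs_eq_natAbs, Int.cast_natCast]
    rw [habs, show -ε * (z.natAbs:ℝ) = (z.natAbs:ℝ) * (-ε) by ring, Real.exp_nat_mul]
  have hXlaw' : ∀ i, ∀ j : ℕ, (ℙ : Measure Ω₂) {ω | X i ω = j} =
      ENNReal.ofReal (pol p r j) := by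
    intro i j
    rw [← ENNReal.ofReal_toReal (measure_ne_top ℙ _), hXlaw i j]
    rfl
  -- measurability
  have hLmeas : Measurable (fun ω => ν 0 ω + ν 1 ω + ν 2 ω) :=
    ((hνmeas 0).add (hνmeas 1)).add (hνmeas 2)
  have hcast : Measurable (fun k : ℕ => (k : ℤ)) := measurable_from_top
  have hXZ : ∀ i, Measurable (fun ω => (X i ω : ℤ)) := fun i => hcast.comp (hXmeas i)
  have hRmeas : Measurable (fun ω => ∑ i : Fin n, ((X (Sum.inl i) ω : ℤ) - (X (Sum.inr i) ω : ℤ))) :=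
    Finset.measurable_sum _ (fun i _ => ((hXZ (Sum.inl i)).sub (hXZ (Sum.inr i))))
  refine Measure.ext_of_singleton fun z => ?_
  rw [Measure.map_apply hLmeas (measurableSet_singleton z),
    Measure.map_apply hRmeas (measurableSet_singleton z)]
  -- abbreviations
  set G : ℕ → ℝ≥0∞ := fun a => ENNReal.ofReal ((1 - p) * p ^ a) with hGdef
  set P3 : ℕ → ℝ≥0∞ := fun a => ENNReal.ofReal (pol p 3 a) with hP3def
  -- pol algebra
  have hG1 : G = fun a => ENNReal.ofReal (pol p 1 a) := funext fun a => by rw [pol_one]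
  have hG2 : ncV (fun a => ENNReal.ofReal (pol p 1 a)) (fun a => ENNReal.ofReal (pol p 1 a)) =
      fun a => ENNReal.ofReal (pol p 2 a) := funext fun a => by
    rw [ncV_pol p 1 1 hp.le hp1 one_pos one_pos]; norm_num
  have hG3 : ncV (fun a => ENNReal.ofReal (pol p 2 a)) (fun a => ENNReal.ofReal (pol p 1 a)) =
      P3 := funext fun a => by
    rw [ncV_pol p 2 1 hp.le hp1 two_pos one_pos]; norm_num; rfl
  -- LHS
  have hLdecomp : ∀ w : ℤ, ENNReal.ofReal ((1 - p) / (1 + p) * p ^ w.natAbs) = dV G G w :=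
    fun w => lap_decomp p hp hp1 w
  have h01 : IndepFun (ν 0) (ν 1) ℙ := hνindep.indepFun (by decide)
  have h012 : IndepFun (fun ω => ν 0 ω + ν 1 ω) (ν 2) ℙ := by
    have h := hνindep.indepFun_add_left hνmeas 0 1 2 (by decide) (by decide)
    exact h
  have lhs_eq : (ℙ : Measure Ω₁) ((fun ω => ν 0 ω + ν 1 ω + ν 2 ω) ⁻¹' {z}) = dV P3 P3 z := by
    calc (ℙ : Measure Ω₁) ((fun ω => ν 0 ω + ν 1 ω + ν 2 ω) ⁻¹' {z})
        = ℙ {ω | (fun ω => ν 0 ω + ν 1 ω) ω + ν 2 ω = z} := rfl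
      _ = ∑' x : ℤ, ℙ {ω | ν 0 ω + ν 1 ω = x} * ℙ {ω | ν 2 ω = z - x} :=
          addZ _ _ ((hνmeas 0).add (hνmeas 1)) (hνmeas 2) h012 z
      _ = ∑' x : ℤ, (∑' y : ℤ, dV G G y * dV G G (x - y)) * dV G G (z - x) := by
          refine tsum_congr fun x => ?_
          rw [addZ _ _ (hνmeas 0) (hνmeas 1) h01 x, hνlaw' 2, hLdecomp]
          congr 1
          exact tsum_congr fun y => by rw [hνlaw' 0, hνlaw' 1, hLdecomp, hLdecomp]
      _ = ∑' x : ℤ, dV (ncV G G) (ncV G G) x * dV G G (z - x) :=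
          tsum_congr fun x => by rw [convD]
      _ = dV (ncV (ncV G G) G) (ncV (ncV G G) G) z := convD _ _ _ _ z
      _ = dV P3 P3 z := by rw [hG1, hG2, hG3]
  rw [lhs_eq]
  -- RHS
  set S : Ω₂ → ℕ := fun ω => ∑ i : Fin n, X (Sum.inl i) ω with hSdef
  set T : Ω₂ → ℕ := fun ω => ∑ i : Fin n, X (Sum.inr i) ω with hTdef
  have hSmeas : Measurable S := Finset.measurable_sum _ (fun i _ => hXmeas (Sum.inl i))
  have hTmeas : Measurable T := Finset.measurable_sum _ (fun i _ => hXmeas (Sum.inr i))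
  let eS : Fin n ↪ (Fin n ⊕ Fin n) := ⟨Sum.inl, Sum.inl_injective⟩
  let eT : Fin n ↪ (Fin n ⊕ Fin n) := ⟨Sum.inr, Sum.inr_injective⟩
  have hne : Nonempty (Fin n) := ⟨⟨0, hn⟩⟩
  have hSpmf : ∀ k : ℕ, (ℙ : Measure Ω₂) {ω | S ω = k} = P3 k := by
    intro k
    have := sum_pmf p r hp.le hp1 hr X hXmeas hXindep hXlaw'
      (Finset.univ.map eS) ((Finset.univ_nonempty (α := Fin n)).map) k
    have hsum : ∀ ω, ∑ i ∈ Finset.univ.map eS, X i ω = S ω := fun ω => by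
      rw [Finset.sum_map]; rfl
    have hev : {ω | ∑ i ∈ Finset.univ.map eS, X i ω = k} = {ω | S ω = k} := by
      ext ω; rw [Set.mem_setOf_eq, Set.mem_setOf_eq, hsum]
    rw [hev] at this
    have harg : (((Finset.univ.map eS).card : ℕ) : ℝ) * r = 3 := by
      rw [Finset.card_map, Finset.card_univ, Fintype.card_fin, hrdef]
      field_simp
    rw [this, harg, hP3def]
  have hTpmf : ∀ k : ℕ, (ℙ : Measure Ω₂) {ω | T ω = k} = P3 k := by
    intro k
    have := sum_pmf p r hp.le hp1 hr X hXmeas hXindep hXlaw'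
      (Finset.univ.map eT) ((Finset.univ_nonempty (α := Fin n)).map) k
    have hsum : ∀ ω, ∑ i ∈ Finset.univ.map eT, X i ω = T ω := fun ω => by
      rw [Finset.sum_map]; rfl
    have hev : {ω | ∑ i ∈ Finset.univ.map eT, X i ω = k} = {ω | T ω = k} := by
      ext ω; rw [Set.mem_setOf_eq, Set.mem_setOf_eq, hsum]
    rw [hev] at this
    have harg : (((Finset.univ.map eT).card : ℕ) : ℝ) * r = 3 := by
      rw [Finset.card_map, Finset.card_univ, Fintype.card_fin, hrdef]
      field_simp
    rw [this, harg, hP3def]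
  have hdisj : Disjoint (Finset.univ.map eS) (Finset.univ.map eT) := by
    rw [Finset.disjoint_left]
    intro x hx hx'
    simp only [Finset.mem_map, Finset.mem_univ, true_and] at hx hx'
    obtain ⟨a, ha⟩ := hx; obtain ⟨b, hb⟩ := hx'
    rw [← ha] at hb
    exact Sum.inr_ne_inl hb
  have hST : IndepFun S T ℙ := by
    have base := hXindep.indepFun_finset (Finset.univ.map eS) (Finset.univ.map eT) hdisj hXmeas
    have comp := base.comp
      (φ := fun v : ({x // x ∈ Finset.univ.map eS} → ℕ) => ∑ i, v i)
      (ψ := fun v : ({x // x ∈ Finset.univ.map eT} → ℕ) => ∑ i, v i)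
      (Finset.measurable_sum _ (fun i _ => measurable_pi_apply i))
      (Finset.measurable_sum _ (fun i _ => measurable_pi_apply i))
    have hcompS : ((fun v : ({x // x ∈ Finset.univ.map eS} → ℕ) => ∑ i, v i) ∘
        (fun a (i : {x // x ∈ Finset.univ.map eS}) => X i a)) = S := by
      funext a
      simp only [Function.comp_apply, hSdef]
      rw [Finset.sum_coe_sort (Finset.univ.map eS) (fun i => X i a), Finset.sum_map]
      rfl
    have hcompT : ((fun v : ({x // x ∈ Finset.univ.map eT} → ℕ) => ∑ i, v i) ∘
        (fun a (i : {x // x ∈ Finset.univ.map eT}) => X i a)) = T := by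
      funext a
      simp only [Function.comp_apply, hTdef]
      rw [Finset.sum_coe_sort (Finset.univ.map eT) (fun i => X i a), Finset.sum_map]
      rfl
    rwa [hcompS, hcompT] at comp
  have hev2 : ((fun ω => ∑ i : Fin n, ((X (Sum.inl i) ω : ℤ) - (X (Sum.inr i) ω : ℤ))) ⁻¹' {z}) =
      {ω | (fun a b => (a:ℤ) - b) (S ω) (T ω) = z} := by
    ext ω
    simp only [Set.mem_preimage, Set.mem_singleton_iff, Set.mem_setOf_eq, hSdef, hTdef]
    constructor <;> intro h <;> [skip; skip] <;>
      · rw [← h]; push_cast; rw [Finset.sum_sub_distrib]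
  rw [hev2, indep_prob S T hSmeas hTmeas hST (fun a b => (a:ℤ) - b) z, dV]
  exact tsum_congr fun q => by rw [hSpmf q.1, hTpmf q.2]
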